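/- For every abelian group G and every n ∈ ℕ, the topologies Z±_n(G) and Z_n(G) coincide; consequently the group Zariski topology Z±(G) coincides with the semigroup Zariski topology Z(G). -/

import Mathlib

open Topology TopologicalSpace

/-- Evaluation of the semigroup polynomial `a₀ x a₁ x ⋯ x aₙ`, encoded by its first
coefficient `a` and the list `l = [a₁, …, aₙ]` of remaining coefficients
(so the degree is `l.length`). -/
def sgEval {M : Type*} [Monoid M] (x a : M) (l : List M) : M :=
  a * (l.map (fun b => x * b)).prod

/-- The semigroup Zariski topology `Z(M)`, generated by the sets
`{x | f x ≠ g x}` with `f, g` semigroup polynomials. -/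
def sgZariski (M : Type*) [Monoid M] : TopologicalSpace M :=
  generateFrom {U | ∃ (a : M) (l : List M) (b : M) (m : List M),
    U = {x | sgEval x a l ≠ sgEval x b m}}

/-- The bounded semigroup Zariski topology `Z_n(M)`, generated by the sets
`{x | f x ≠ g x}` with `f, g` semigroup polynomials of degree at most `n`. -/
def sgZariskiLe (M : Type*) [Monoid M] (n : ℕ) : TopologicalSpace M :=
  generateFrom {U | ∃ (a : M) (l : List M) (b : M) (m : List M),
    l.length ≤ n ∧ m.length ≤ n ∧ U = {x | sgEval x a l ≠ sgEval x b m}}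

/-- Evaluation of the group polynomial `a₀ x^{ε₁} a₁ ⋯ x^{εₙ} aₙ`, encoded by its first
coefficient `a` and the list `l = [(ε₁,a₁), …, (εₙ,aₙ)]`, where `true` stands for the
exponent `1` and `false` for the exponent `-1` (so the degree is `l.length`). -/
def gpEval {G : Type*} [Group G] (x a : G) (l : List (Bool × G)) : G :=
  a * (l.map (fun p => (if p.1 then x else x⁻¹) * p.2)).prod

/-- The group Zariski topology `Z±(G)`, generated by the sets `{x | f x ≠ 1}`
with `f` a group polynomial. -/
def gpZariski (G : Type*) [Group G] : TopologicalSpace G :=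
  generateFrom {U | ∃ (a : G) (l : List (Bool × G)), U = {x | gpEval x a l ≠ 1}}

/-- The bounded group Zariski topology `Z±_n(G)`, generated by the sets `{x | f x ≠ 1}`
with `f` a group polynomial of degree at most `n`. -/
def gpZariskiLe (G : Type*) [Group G] (n : ℕ) : TopologicalSpace G :=
  generateFrom {U | ∃ (a : G) (l : List (Bool × G)), l.length ≤ n ∧ U = {x | gpEval x a l ≠ 1}}


section Aux

variable {G : Type*} [CommGroup G]

lemma sgEval_eq (x a : G) (l : List G) :
    sgEval x a l = a * l.prod * x ^ l.length := by
  unfold sgEval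
  induction l generalizing a with
  | nil => simp
  | cons b l ih =>
    simp only [List.map_cons, List.prod_cons, List.length_cons]
    rw [← mul_assoc, ih]
    simp [pow_succ, mul_assoc, mul_comm, mul_left_comm]

lemma gpEval_eq (x a : G) (l : List (Bool × G)) :
    gpEval x a l =
      a * (l.map Prod.snd).prod * x ^ (l.countP (·.1)) * x⁻¹ ^ (l.countP (fun p => !p.1)) := by
  unfold gpEval
  induction l generalizing a with
  | nil => simp
  | cons b l ih =>
    simp only [List.map_cons, List.prod_cons, List.countP_cons]
    rw [← mul_assoc, ih]
    cases h : b.1 <;>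
      simp [h, pow_succ, mul_assoc, mul_comm, mul_left_comm]

lemma sgEval_replicate (x c : G) (k : ℕ) :
    sgEval x c (List.replicate k (1 : G)) = c * x ^ k := by
  simp [sgEval_eq]

lemma key_iff (c d x : G) {j k : ℕ} (h : j ≤ k) :
    c * x ^ k = d * x ^ j ↔ d⁻¹ * c * x ^ (k - j) = 1 := by
  rw [← pow_sub_mul_pow x h, ← mul_assoc, mul_left_inj (x ^ j), mul_assoc,
    inv_mul_eq_one, eq_comm]

lemma key_iff' (c d x : G) {j k : ℕ} (h : j ≤ k) :
    c * x ^ j = d * x ^ k ↔ c⁻¹ * d * x ^ (k - j) = 1 := by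
  rw [eq_comm, key_iff d c x h]

/-- Every semigroup-polynomial generator is a group-polynomial generator of degree
at most the max of the two degrees. -/
lemma sg_gen_to_gp (a : G) (l : List G) (b : G) (m : List G) :
    ∃ (a' : G) (l' : List (Bool × G)), l'.length ≤ max l.length m.length ∧
      {x | sgEval x a l ≠ sgEval x b m} = {x | gpEval x a' l' ≠ 1} := by
  rcases le_total m.length l.length with h | h
  · refine ⟨(b * m.prod)⁻¹ * (a * l.prod),
      List.replicate (l.length - m.length) (true, (1 : G)), ?_, ?_⟩
    · simp only [List.length_replicate]; exact le_max_of_le_left (Nat.sub_le _ _)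
    · ext x
      simp only [Set.mem_setOf_eq, sgEval_eq, gpEval_eq, ne_eq]
      rw [key_iff _ _ _ h]
      simp [List.countP_replicate, mul_assoc]
  · refine ⟨(a * l.prod)⁻¹ * (b * m.prod),
      List.replicate (m.length - l.length) (true, (1 : G)), ?_, ?_⟩
    · simp only [List.length_replicate]; exact le_max_of_le_right (Nat.sub_le _ _)
    · ext x
      simp only [Set.mem_setOf_eq, sgEval_eq, gpEval_eq, ne_eq]
      rw [key_iff' _ _ _ h]
      simp [List.countP_replicate, mul_assoc]

/-- Every group-polynomial generator is a semigroup-polynomial generator with both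
degrees at most the original degree. -/
lemma gp_gen_to_sg (a : G) (l : List (Bool × G)) :
    ∃ (a' : G) (l' : List G) (b : G) (m : List G),
      l'.length ≤ l.length ∧ m.length ≤ l.length ∧
      {x | gpEval x a l ≠ 1} = {x | sgEval x a' l' ≠ sgEval x b m} := by
  refine ⟨a * (l.map Prod.snd).prod, List.replicate (l.countP (·.1)) (1 : G),
    1, List.replicate (l.countP (fun p => !p.1)) (1 : G),
    by simpa using l.countP_le_length (p := (·.1)), by simpa using l.countP_le_length (p := fun p => !p.1), ?_⟩
  ext x
  simp only [Set.mem_setOf_eq, gpEval_eq, sgEval_replicate, ne_eq, one_mul]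
  rw [inv_pow, mul_inv_eq_one]

end Aux

/-- For every abelian group `G` and every `n`, the bounded group Zariski topology `Z±_n(G)`
coincides with the bounded semigroup Zariski topology `Z_n(G)`; consequently
`Z±(G) = Z(G)`. -/
theorem statement1 (G : Type*) [CommGroup G] :
    (∀ n : ℕ, gpZariskiLe G n = sgZariskiLe G n) ∧ gpZariski G = sgZariski G := by
  have key : ∀ (S T : Set (Set G)),
      (∀ U ∈ S, U ∈ T) → TopologicalSpace.generateFrom T ≤ TopologicalSpace.generateFrom S :=
    fun S T h => le_generateFrom fun U hU =>
      TopologicalSpace.isOpen_generateFrom_of_mem (h U hU)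
  constructor
  · intro n
    apply le_antisymm
    · apply key
      rintro U ⟨a, l, b, m, hl, hm, rfl⟩
      obtain ⟨a', l', hlen, heq⟩ := sg_gen_to_gp a l b m
      exact ⟨a', l', hlen.trans (max_le hl hm), heq⟩
    · apply key
      rintro U ⟨a, l, hl, rfl⟩
      obtain ⟨a', l', b, m, h1, h2, heq⟩ := gp_gen_to_sg a l
      exact ⟨a', l', b, m, h1.trans hl, h2.trans hl, heq⟩
  · apply le_antisymm
    · apply key
      rintro U ⟨a, l, b, m, rfl⟩
      obtain ⟨a', l', _, heq⟩ := sg_gen_to_gp a l b m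
      exact ⟨a', l', heq⟩
    · apply key
      rintro U ⟨a, l, rfl⟩
      obtain ⟨a', l', b, m, _, _, heq⟩ := gp_gen_to_sg a l
      exact ⟨a', l', b, m, heq⟩
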